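/- Let Γ = ℤ_{m₁} ⊕ ⋯ ⊕ ℤ_{m_r} with r > 1, let D be a set of positive divisors of m₁, let 𝐃 = {(d, 1, …, 1) : d ∈ D}, and let Γ' = ℤ_{m₂} ⊕ ⋯ ⊕ ℤ_{m_r}. Then the gcd-graph Cay(Γ, S_Γ(𝐃)) is equal (as a graph on the vertex set ℤ_{m₁} × Γ') to the Kronecker product ICG_{m₁}(D) × Cay(Γ', S_{Γ'}({(1, …, 1)})). -/
import Mathlib


open Matrix Complex

/-- Adjacency matrix of the Cayley graph `Cay(Γ, S)`: `a, b` adjacent iff `a - b ∈ S`. -/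
noncomputable def cayAdj {G : Type*} [AddGroup G] (S : Set G) : Matrix G G ℂ :=
  Matrix.of fun a b => S.indicator (fun _ => (1 : ℂ)) (a - b)

/-- Adjacency matrix of the integral circulant graph `ICG_n(D)`. -/
noncomputable def icgAdj (n : ℕ) (D : Set ℕ) : Matrix (ZMod n) (ZMod n) ℂ :=
  cayAdj {x : ZMod n | Nat.gcd x.val n ∈ D}

/-- Let `Γ = ℤ_{m₀} ⊕ ⋯ ⊕ ℤ_{m_r}` (at least two factors), let `D` be a set
of positive divisors of `m₀`, let `𝐃 = {(d, 1, …, 1) : d ∈ D}`, and let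
`Γ' = ℤ_{m₁} ⊕ ⋯ ⊕ ℤ_{m_r}`.  Then the gcd-graph `Cay(Γ, S_Γ(𝐃))` equals, as a graph on the
vertex set `ℤ_{m₀} × Γ'` (via `x ↦ (x 0, Fin.tail x)`), the Kronecker product
`ICG_{m₀}(D) × Cay(Γ', S_{Γ'}({(1, …, 1)}))`.  (Convention: `gcd(0, n) = n`.) -/
theorem gcdGraph_eq_kronecker (r : ℕ) (hr : 1 ≤ r) (m : Fin (r + 1) → ℕ)
    (hm : ∀ i, 0 < m i) (D : Set ℕ) (hD : ∀ d ∈ D, 0 < d ∧ d ∣ m 0) :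
    ∀ x y : (∀ i, ZMod (m i)),
      cayAdj {z : ∀ i, ZMod (m i) |
          ∃ d ∈ D, Nat.gcd (z 0).val (m 0) = d ∧
            ∀ i : Fin r, Nat.gcd (z i.succ).val (m i.succ) = 1} x y =
      Matrix.kroneckerMap (· * ·)
        (icgAdj (m 0) D)
        (cayAdj {z : ∀ i : Fin r, ZMod (m i.succ) |
            ∀ i : Fin r, Nat.gcd (z i).val (m i.succ) = 1})
        (x 0, Fin.tail x) (y 0, Fin.tail y) := by
  intro x y
  classical
  simp only [cayAdj, icgAdj, Matrix.of_apply, Matrix.kroneckerMap_apply,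
    Set.indicator_apply, Set.mem_setOf_eq]
  have h1 : ∀ i : Fin r, (Fin.tail x - Fin.tail y) i = (x - y) i.succ := fun i => rfl
  have h0 : (x - y) 0 = x 0 - y 0 := rfl
  have key : (∃ d ∈ D, Nat.gcd ((x - y) 0).val (m 0) = d ∧
      ∀ i : Fin r, Nat.gcd ((x - y) i.succ).val (m i.succ) = 1) ↔
      (Nat.gcd (x 0 - y 0).val (m 0) ∈ D ∧
        ∀ i : Fin r, Nat.gcd ((Fin.tail x - Fin.tail y) i).val (m i.succ) = 1) := by
    constructor
    · rintro ⟨d, hd, hgcd, htail⟩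
      rw [h0] at hgcd
      exact ⟨hgcd ▸ hd, fun i => by rw [h1]; exact htail i⟩
    · rintro ⟨hd, htail⟩
      exact ⟨_, hd, by rw [h0], fun i => by rw [← h1]; exact htail i⟩
  rw [if_congr key rfl rfl]
  by_cases hA : Nat.gcd (x 0 - y 0).val (m 0) ∈ D <;>
    by_cases hB : ∀ i : Fin r, Nat.gcd ((Fin.tail x - Fin.tail y) i).val (m i.succ) = 1 <;>
    simp [hA, hB]
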